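/- (Semi-trivial solution (4.3).) Let c, d, σ ∈ ℝ, let λ > 0 and m ∈ (0,1], and let C, S, D : ℝ → ℝ be differentiable functions satisfying the Jacobi cnoidal identities. Define η(ξ) = −1 and w(ξ) = (−8dλ²m²σ + 4dλ²σ + σ) + 12dλ²m²σ·C(ξ)². Then (η, w) satisfies, for all ξ ∈ ℝ, the traveling-wave ODE system of the abcd-system with a = b = 0: −σ·η′(ξ) + w′(ξ) + (η·w)′(ξ) = 0 and −σ·w′(ξ) + η′(ξ) + w(ξ)·w′(ξ) + c·η‴(ξ) + d·σ·w‴(ξ) = 0. -/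

import Mathlib

/-- the semi-trivial cnoidal solution (4.3), `η ≡ -1` and
`w = (-8dλ²m²σ + 4dλ²σ + σ) + 12dλ²m²σ·cn²`, solves the traveling-wave ODE system
of the abcd-system with `a = b = 0`. -/
theorem abcd_semitrivial_solution_4_3
    (c d σ lam m : ℝ) (hlam : 0 < lam) (hm : m ∈ Set.Ioc (0 : ℝ) 1)
    (C S D : ℝ → ℝ)
    (hC : Differentiable ℝ C) (hS : Differentiable ℝ S) (hD : Differentiable ℝ D)
    (hSid : ∀ ξ : ℝ, S ξ ^ 2 = 1 - C ξ ^ 2)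
    (hDid : ∀ ξ : ℝ, D ξ ^ 2 = 1 - m ^ 2 + m ^ 2 * C ξ ^ 2)
    (hC' : ∀ ξ : ℝ, deriv C ξ = -lam * S ξ * D ξ)
    (hS' : ∀ ξ : ℝ, deriv S ξ = lam * C ξ * D ξ)
    (hD' : ∀ ξ : ℝ, deriv D ξ = -m ^ 2 * lam * C ξ * S ξ)
    (η w : ℝ → ℝ)
    (hη : ∀ x : ℝ, η x = -1)
    (hw : ∀ x : ℝ, w x = (-8*d*lam^2*m^2*σ + 4*d*lam^2*σ + σ)
        + 12*d*lam^2*m^2*σ * C x ^ 2) :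
    ∀ ξ : ℝ,
      (-σ * deriv η ξ + deriv w ξ + deriv (fun x => η x * w x) ξ = 0) ∧
      (-σ * deriv w ξ + deriv η ξ + w ξ * deriv w ξ
        + c * deriv (deriv (deriv η)) ξ + d * σ * deriv (deriv (deriv w)) ξ = 0) := by
  have hηf : η = fun _ : ℝ => (-1 : ℝ) := funext hη
  have hwf : w = fun x : ℝ => (-8*d*lam^2*m^2*σ + 4*d*lam^2*σ + σ)
      + 12*d*lam^2*m^2*σ * C x ^ 2 := funext hw
  -- derivatives of η
  have hη1 : deriv η = fun _ : ℝ => (0 : ℝ) := by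
    funext x; rw [hηf]; simp
  have hη2 : deriv (deriv η) = fun _ : ℝ => (0 : ℝ) := by
    funext x; rw [hη1]; simp
  have hη3 : ∀ ξ : ℝ, deriv (deriv (deriv η)) ξ = 0 := by
    intro ξ; rw [hη2]; simp
  -- first derivative of w
  have hw1 : ∀ ξ : ℝ, HasDerivAt w (-24*d*lam^3*m^2*σ * (C ξ * (S ξ * D ξ))) ξ := by
    intro ξ
    have h := (((hC ξ).hasDerivAt.fun_pow 2).const_mul
        (12*d*lam^2*m^2*σ)).const_add (-8*d*lam^2*m^2*σ + 4*d*lam^2*σ + σ)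
    rw [← hwf] at h
    refine h.congr_deriv ?_
    rw [hC' ξ]; ring
  have hwd : deriv w = fun ξ : ℝ => -24*d*lam^3*m^2*σ * (C ξ * (S ξ * D ξ)) :=
    funext fun ξ => (hw1 ξ).deriv
  -- second derivative of w
  have hw2 : ∀ ξ : ℝ, HasDerivAt (deriv w)
      (-24*d*lam^3*m^2*σ * (deriv C ξ * (S ξ * D ξ)
        + C ξ * (deriv S ξ * D ξ + S ξ * deriv D ξ))) ξ := by
    intro ξ
    have h := (((hC ξ).hasDerivAt.fun_mul
        ((hS ξ).hasDerivAt.fun_mul (hD ξ).hasDerivAt)).const_mul (-24*d*lam^3*m^2*σ))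
    rw [← hwd] at h
    exact h
  have hwd2 : deriv (deriv w) = fun ξ : ℝ =>
      -24*d*lam^4*m^2*σ * (-(1 - m^2) + ((2 - 4*m^2) * C ξ ^ 2 + 3*m^2 * C ξ ^ 4)) := by
    funext ξ
    rw [(hw2 ξ).deriv, hC' ξ, hS' ξ, hD' ξ]
    linear_combination (-24*d*lam^4*m^2*σ * (C ξ ^ 2 - S ξ ^ 2)) * hDid ξ
      + (24*d*lam^4*m^2*σ * ((1 - m^2) + 2*m^2 * C ξ ^ 2)) * hSid ξ
  -- third derivative of w
  have hw3 : ∀ ξ : ℝ, HasDerivAt (deriv (deriv w))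
      (-24*d*lam^4*m^2*σ * ((2 - 4*m^2) * (2 * C ξ * deriv C ξ)
        + 3*m^2 * (4 * C ξ ^ 3 * deriv C ξ))) ξ := by
    intro ξ
    have h := (((((hC ξ).hasDerivAt.fun_pow 2).const_mul (2 - 4*m^2)).fun_add
        (((hC ξ).hasDerivAt.fun_pow 4).const_mul (3*m^2))).const_add
        (-(1 - m^2))).const_mul (-24*d*lam^4*m^2*σ)
    rw [← hwd2] at h
    refine h.congr_deriv ?_
    push_cast
    ring
  intro ξ
  have e1 : deriv w ξ = -24*d*lam^3*m^2*σ * (C ξ * (S ξ * D ξ)) := (hw1 ξ).deriv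
  have e3 : deriv (deriv (deriv w)) ξ
      = -24*d*lam^4*m^2*σ * ((2 - 4*m^2) * (2 * C ξ * (-lam * S ξ * D ξ))
        + 3*m^2 * (4 * C ξ ^ 3 * (-lam * S ξ * D ξ))) := by
    rw [(hw3 ξ).deriv, hC' ξ]
  constructor
  · have hmul : (fun x => η x * w x) = fun x => -(w x) := by
      funext x; rw [hη x]; ring
    rw [hmul, deriv.fun_neg, hη1]
    ring
  · have hη1' : deriv η ξ = 0 := by rw [hη1]
    rw [e1, e3, hη3 ξ, hη1', hw ξ]
    ring
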